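/- (Localized regime, constrained case.) For every δ > 1, Z^c_{δ,N} ~ (1/μ_δ) e^{N F_δ} as N → ∞. -/

import Mathlib

open Filter Finset

/-- The `k`-fold convolution of `q : ℕ → ℝ` with itself. -/
noncomputable def convPow (q : ℕ → ℝ) : ℕ → ℕ → ℝ
  | 0, n => if n = 0 then 1 else 0
  | k + 1, n => ∑ i ∈ Finset.range (n + 1), convPow q k i * q (n - i)

/-- `L : ℕ → ℝ` is slowly varying at infinity: `L(⌊cn⌋)/L(n) → 1` for every `c > 0`. -/
def SlowlyVaryingNat (L : ℕ → ℝ) : Prop :=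
  ∀ c : ℝ, 0 < c → Tendsto (fun n : ℕ => L ⌊c * (n : ℝ)⌋₊ / L n) atTop (nhds 1)

/-- The (modified) constrained partition function `Z^c_{δ,N} = ∑_{k=0}^{N} δ^k q^{k*}(N)`. -/
noncomputable def Zc (q : ℕ → ℝ) (δ : ℝ) (N : ℕ) : ℝ :=
  ∑ k ∈ Finset.range (N + 1), δ ^ k * convPow q k N

noncomputable def uRen (p : ℕ → ℝ) (N : ℕ) : ℝ :=
  ∑ k ∈ Finset.range (N + 1), convPow p k N

lemma convPow_nonneg {p : ℕ → ℝ} (hp : ∀ t, 0 ≤ p t) : ∀ k n, 0 ≤ convPow p k n := by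
  intro k
  induction k with
  | zero => intro n; simp only [convPow]; split <;> norm_num
  | succ k ih =>
    intro n
    exact Finset.sum_nonneg fun i _ => mul_nonneg (ih i) (hp _)

lemma convPow_eq_zero {p : ℕ → ℝ} (hp0 : p 0 = 0) : ∀ k n, n < k → convPow p k n = 0 := by
  intro k
  induction k with
  | zero => intro n hn; omega
  | succ k ih =>
    intro n hn
    rw [convPow]
    apply Finset.sum_eq_zero
    intro i hi
    rw [Finset.mem_range] at hi
    rcases lt_or_ge i k with h | h
    · rw [ih i h, zero_mul]
    · have : i = n ∧ k = n := by omega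
      rw [this.1, Nat.sub_self, hp0, mul_zero]

lemma uRen_zero (p : ℕ → ℝ) : uRen p 0 = 1 := by
  simp [uRen, convPow]

lemma uRen_succ {p : ℕ → ℝ} (hp0 : p 0 = 0) (N : ℕ) :
    uRen p (N + 1) = ∑ i ∈ Finset.range (N + 1), p (N + 1 - i) * uRen p i := by
  have h1 : uRen p (N + 1)
      = ∑ k ∈ Finset.range (N + 1), convPow p (k + 1) (N + 1) := by
    rw [uRen, Finset.sum_range_succ']
    simp [convPow]
  rw [h1]
  have h2 : ∀ k ∈ Finset.range (N + 1), convPow p (k+1) (N+1)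
      = ∑ i ∈ Finset.range (N + 2), convPow p k i * p (N + 1 - i) := by
    intro k _; rw [convPow]
  rw [Finset.sum_congr rfl h2, Finset.sum_comm]
  rw [Finset.sum_range_succ]
  have h3 : ∑ k ∈ Finset.range (N + 1), convPow p k (N + 1) * p (N + 1 - (N + 1)) = 0 := by
    simp [hp0]
  rw [h3, add_zero]
  apply Finset.sum_congr rfl
  intro i hi
  rw [Finset.mem_range] at hi
  have h4 : ∑ k ∈ Finset.range (N + 1), convPow p k i * p (N + 1 - i)
      = (∑ k ∈ Finset.range (i + 1), convPow p k i) * p (N + 1 - i) := by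
    rw [Finset.sum_mul]
    symm
    apply Finset.sum_subset
    · intro x hx; rw [Finset.mem_range] at *; omega
    · intro x _ hx
      rw [Finset.mem_range] at hx
      rw [convPow_eq_zero hp0 x i (by omega), zero_mul]
  rw [h4, ← uRen, mul_comm]

lemma uRen_nonneg {p : ℕ → ℝ} (hp : ∀ t, 0 ≤ p t) (N : ℕ) : 0 ≤ uRen p N :=
  Finset.sum_nonneg fun k _ => convPow_nonneg hp k N

lemma uRen_le_one {p : ℕ → ℝ} (hp0 : p 0 = 0) (hpnn : ∀ t, 0 ≤ p t)
    (hpsum : Summable p) (hptot : ∑' t, p t = 1) : ∀ N, uRen p N ≤ 1 := by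
  intro N
  induction N using Nat.strong_induction_on with
  | _ N ih =>
    match N with
    | 0 => rw [uRen_zero]
    | N + 1 =>
      rw [uRen_succ hp0]
      calc ∑ i ∈ Finset.range (N + 1), p (N + 1 - i) * uRen p i
          ≤ ∑ i ∈ Finset.range (N + 1), p (N + 1 - i) := by
            apply Finset.sum_le_sum
            intro i hi
            rw [Finset.mem_range] at hi
            calc p (N+1-i) * uRen p i ≤ p (N+1-i) * 1 :=
                  mul_le_mul_of_nonneg_left (ih i (by omega)) (hpnn _)
              _ = p (N+1-i) := mul_one _
        _ = ∑ i ∈ Finset.range (N + 1), p (i + 1) := by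
            rw [← Finset.sum_range_reflect]
            apply Finset.sum_congr rfl
            intro i hi
            rw [Finset.mem_range] at hi
            congr 1
            omega
        _ ≤ ∑ i ∈ Finset.range (N + 2), p i := by
            rw [Finset.sum_range_succ' p (N + 1), hp0, add_zero]
        _ ≤ ∑' t, p t := Summable.sum_le_tsum _ (fun i _ => hpnn i) hpsum
        _ = 1 := hptot

/-- tsum form of the renewal equation. -/
lemma uRen_tsum {p : ℕ → ℝ} (hp0 : p 0 = 0) (N : ℕ) :
    uRen p (N + 1) = ∑' s : ℕ, (if s ≤ N + 1 then p s * uRen p (N + 1 - s) else 0) := by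
  rw [tsum_eq_sum (s := Finset.range (N + 2))
    (by intro b hb; rw [Finset.mem_range] at hb; rw [if_neg (by omega)])]
  have : ∀ s ∈ Finset.range (N + 2),
      (if s ≤ N + 1 then p s * uRen p (N + 1 - s) else 0) = p s * uRen p (N + 1 - s) := by
    intro s hs; rw [Finset.mem_range] at hs; rw [if_pos (by omega)]
  rw [Finset.sum_congr rfl this, uRen_succ hp0,
    ← Finset.sum_range_reflect (fun s => p s * uRen p (N + 1 - s)) (N + 2),
    Finset.sum_range_succ (fun j => p (N + 2 - 1 - j) * uRen p (N + 1 - (N + 2 - 1 - j))) (N + 1)]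
  have hlast : p (N + 2 - 1 - (N + 1)) * uRen p (N + 1 - (N + 2 - 1 - (N + 1))) = 0 := by
    rw [show (N + 2 - 1 - (N + 1) : ℕ) = 0 by omega, hp0, zero_mul]
  rw [hlast, add_zero]
  apply Finset.sum_congr rfl
  intro i hi
  rw [Finset.mem_range] at hi
  rw [show (N + 2 - 1 - i : ℕ) = N + 1 - i by omega, show (N + 1 - (N + 1 - i) : ℕ) = i by omega]

section Tail

variable {p : ℕ → ℝ}

/-- tail function r t = ∑_{s > t} p s -/
noncomputable def tailR (p : ℕ → ℝ) (t : ℕ) : ℝ := ∑' s : ℕ, if t < s then p s else 0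

lemma tailR_summable_inner (hpnn : ∀ t, 0 ≤ p t) (hpsum : Summable p) (t : ℕ) :
    Summable (fun s : ℕ => if t < s then p s else 0) := by
  apply Summable.of_nonneg_of_le (fun s => by split <;> simp [hpnn]) (fun s => ?_) hpsum
  split <;> simp [hpnn]

lemma tailR_nonneg (hpnn : ∀ t, 0 ≤ p t) (t : ℕ) : 0 ≤ tailR p t :=
  tsum_nonneg fun s => by split <;> simp [hpnn]

lemma tailR_zero (hp0 : p 0 = 0) (hptot : ∑' t, p t = 1) : tailR p 0 = 1 := by
  rw [tailR, ← hptot]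
  apply tsum_congr
  intro s
  match s with
  | 0 => simp [hp0]
  | s + 1 => simp

lemma tailR_succ (hpnn : ∀ t, 0 ≤ p t) (hpsum : Summable p) (t : ℕ) :
    tailR p (t + 1) = tailR p t - p (t + 1) := by
  have h1 : ∀ s : ℕ, (if t + 1 < s then p s else 0)
      = (if t < s then p s else 0) - (if s = t + 1 then p s else 0) := by
    intro s
    rcases Nat.lt_trichotomy s (t+1) with h | h | h
    · rw [if_neg (by omega), if_neg (by omega), if_neg (by omega)]; ring
    · rw [if_neg (by omega), if_pos (by omega), if_pos h, h]; ring
    · rw [if_pos (by omega), if_pos (by omega), if_neg (by omega)]; ring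
  rw [tailR, tsum_congr h1,
    Summable.tsum_sub (tailR_summable_inner hpnn hpsum t)
      (by apply Summable.of_nonneg_of_le (fun s => by split <;> simp [hpnn])
            (fun s => by split <;> simp [hpnn]) hpsum)]
  rw [← tailR]
  congr 1
  rw [tsum_congr (fun b => show (if b = t + 1 then p b else 0) = (if b = t + 1 then p (t+1) else 0)
    by split <;> simp_all)]
  exact tsum_ite_eq (t + 1) (fun _ => p (t + 1))

lemma tailR_identity (hp0 : p 0 = 0) (hpnn : ∀ t, 0 ≤ p t)
    (hpsum : Summable p) (hptot : ∑' t, p t = 1) :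
    ∀ N : ℕ, ∑ t ∈ Finset.range (N + 1), tailR p t * uRen p (N - t) = 1 := by
  intro N
  induction N with
  | zero => simp [tailR_zero hp0 hptot, uRen_zero]
  | succ N ih =>
    rw [Finset.sum_range_succ' (fun t => tailR p t * uRen p (N + 1 - t)) (N + 1)]
    have h1 : ∀ t ∈ Finset.range (N + 1),
        tailR p (t + 1) * uRen p (N + 1 - (t + 1))
          = tailR p t * uRen p (N - t) - p (t + 1) * uRen p (N - t) := by
      intro t ht
      rw [show (N + 1 - (t + 1) : ℕ) = N - t by omega, tailR_succ hpnn hpsum]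
      ring
    rw [Finset.sum_congr rfl h1, Finset.sum_sub_distrib, ih, tailR_zero hp0 hptot,
      Nat.sub_zero, one_mul]
    have h2 : ∑ t ∈ Finset.range (N + 1), p (t + 1) * uRen p (N - t) = uRen p (N + 1) := by
      rw [uRen_succ hp0, ← Finset.sum_range_reflect (fun i => p (N + 1 - i) * uRen p i) (N + 1)]
      apply Finset.sum_congr rfl
      intro t ht
      rw [Finset.mem_range] at ht
      rw [show (N + 1 - (N + 1 - 1 - t) : ℕ) = t + 1 by omega,
        show (N + 1 - 1 - t : ℕ) = N - t by omega]
    rw [h2]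
    ring

lemma tailR_partial_sum (hpnn : ∀ t, 0 ≤ p t) (hpsum : Summable p)
    (hμs : Summable (fun t : ℕ => (t : ℝ) * p t)) (n : ℕ) :
    ∑ t ∈ Finset.range n, tailR p t = ∑' s : ℕ, ((min s n : ℕ) : ℝ) * p s := by
  simp only [tailR]
  rw [← Summable.tsum_finsetSum (fun t _ => tailR_summable_inner hpnn hpsum t)]
  apply tsum_congr
  intro s
  have : ∑ t ∈ Finset.range n, (if t < s then p s else 0)
      = ∑ t ∈ Finset.range (min s n), p s := by
    rw [← Finset.sum_filter]
    apply Finset.sum_congr _ (fun _ _ => rfl)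
    ext t
    simp only [Finset.mem_filter, Finset.mem_range]
    omega
  rw [this, Finset.sum_const, Finset.card_range, nsmul_eq_mul]

lemma tailR_summable (hpnn : ∀ t, 0 ≤ p t) (hpsum : Summable p)
    (hμs : Summable (fun t : ℕ => (t : ℝ) * p t)) :
    Summable (tailR p) := by
  apply summable_of_sum_range_le (c := ∑' s : ℕ, (s : ℝ) * p s) (tailR_nonneg hpnn)
  intro n
  rw [tailR_partial_sum hpnn hpsum hμs]
  have hb : ∀ s : ℕ, ((min s n : ℕ) : ℝ) * p s ≤ (s : ℝ) * p s := fun s =>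
    mul_le_mul_of_nonneg_right (by exact_mod_cast Nat.min_le_left s n) (hpnn s)
  exact Summable.tsum_le_tsum hb (Summable.of_nonneg_of_le
    (fun s => mul_nonneg (by positivity) (hpnn s)) hb hμs) hμs

set_option maxHeartbeats 1000000 in
lemma tailR_tsum (hpnn : ∀ t, 0 ≤ p t) (hpsum : Summable p)
    (hμs : Summable (fun t : ℕ => (t : ℝ) * p t)) :
    ∑' t, tailR p t = ∑' s : ℕ, (s : ℝ) * p s := by
  have hcol : ∀ s : ℕ, Summable (fun t : ℕ => if t < s then p s else 0) := by
    intro s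
    apply summable_of_ne_finset_zero (s := Finset.range s)
    intro t ht
    rw [Finset.mem_range] at ht
    exact if_neg (by omega)
  have hfnn : 0 ≤ (fun z : ℕ × ℕ => if z.1 < z.2 then p z.2 else 0) := by
    intro x; dsimp only; split <;> simp [hpnn]
  have hsum_unc : Summable (fun z : ℕ × ℕ => if z.1 < z.2 then p z.2 else 0) := by
    rw [summable_prod_of_nonneg hfnn]
    exact ⟨fun t => tailR_summable_inner hpnn hpsum t,
      by exact tailR_summable hpnn hpsum hμs⟩
  have hswap := Summable.tsum_comm' (f := fun t s => if t < s then p s else 0)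
    (by exact hsum_unc)
    (fun t => tailR_summable_inner hpnn hpsum t) hcol
  simp only [tailR]
  rw [← hswap]
  apply tsum_congr
  intro s
  have : ∑' t : ℕ, (if t < s then p s else 0) = ∑ t ∈ Finset.range s, p s := by
    rw [tsum_eq_sum (s := Finset.range s) (by
      intro t ht; rw [Finset.mem_range] at ht; exact if_neg (by omega))]
    exact Finset.sum_congr rfl fun t ht => if_pos (Finset.mem_range.mp ht)
  rw [this, Finset.sum_const, Finset.card_range, nsmul_eq_mul]

end Tail

theorem renewal_tendsto (p : ℕ → ℝ) (hp0 : p 0 = 0) (hpnn : ∀ t, 0 ≤ p t)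
    (hpsum : Summable p) (hptot : ∑' t, p t = 1)
    (hμs : Summable (fun t : ℕ => (t : ℝ) * p t))
    (T₀ : ℕ) (hsupp : ∀ t, T₀ ≤ t → 0 < p t) :
    Tendsto (uRen p) atTop (nhds (1 / ∑' t : ℕ, (t : ℝ) * p t)) := by
  set μ := ∑' t : ℕ, (t : ℝ) * p t with hμdef
  have hunn : ∀ N, 0 ≤ uRen p N := uRen_nonneg hpnn
  have hule : ∀ N, uRen p N ≤ 1 := uRen_le_one hp0 hpnn hpsum hptot
  have hμ1 : 1 ≤ μ := by
    rw [← hptot]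
    apply Summable.tsum_le_tsum _ hpsum hμs
    intro t
    match t with
    | 0 => rw [hp0]; simp
    | Nat.succ t =>
      have h1 : (1:ℝ) ≤ ((t+1 : ℕ) : ℝ) := by exact_mod_cast Nat.succ_le_succ (Nat.zero_le t)
      nlinarith [hpnn (t+1)]
  have hμpos : 0 < μ := lt_of_lt_of_le one_pos hμ1
  have hbdd_le : IsBoundedUnder (· ≤ ·) atTop (uRen p) := isBoundedUnder_of ⟨1, hule⟩
  have hbdd_ge : IsBoundedUnder (· ≥ ·) atTop (uRen p) := isBoundedUnder_of ⟨0, hunn⟩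
  -- extraction of ℤ-indexed subsequential limits
  have extract : ∀ m : ℕ → ℕ, ∃ w : ℤ → ℝ, (∀ t, 0 ≤ w t ∧ w t ≤ 1) ∧
      ∃ ψ : ℕ → ℕ, StrictMono ψ ∧
        ∀ t : ℤ, Tendsto (fun j => uRen p ((m (ψ j) : ℤ) + t).toNat) atTop (nhds (w t)) := by
    intro m
    obtain ⟨W, ψ, hψ, hconv⟩ := CompactSpace.tendsto_subseq (X := ℤ → Set.Icc (0:ℝ) 1)
      (fun j t => ⟨uRen p ((m j : ℤ) + t).toNat, hunn _, hule _⟩)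
    refine ⟨fun t => (W t : ℝ), fun t => (W t).2, ψ, hψ, fun t => ?_⟩
    rw [tendsto_pi_nhds] at hconv
    exact (continuous_subtype_val.tendsto (W t)).comp (hconv t)
  -- the main argument
  have main : ∀ (c : ℝ) (sgn : ℝ), (sgn = 1 ∨ sgn = -1) →
      ∀ m : ℕ → ℕ, Tendsto m atTop atTop →
      Tendsto (fun j => uRen p (m j)) atTop (nhds c) →
      (∀ ε : ℝ, 0 < ε → ∀ᶠ n in atTop, sgn * (uRen p n - c) ≤ ε) →
      c * μ = 1 := by
    intro c sgn hsgn m hm hmc hone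
    have hsgn0 : sgn ≠ 0 := by rcases hsgn with h | h <;> rw [h] <;> norm_num
    obtain ⟨w, hwmem, ψ, hψ, hconv⟩ := extract m
    have hm' : Tendsto (fun j => m (ψ j)) atTop atTop := hm.comp hψ.tendsto_atTop
    have hm'c : Tendsto (fun j => uRen p (m (ψ j))) atTop (nhds c) := hmc.comp hψ.tendsto_atTop
    have hc0 : 0 ≤ c := ge_of_tendsto hm'c (Eventually.of_forall fun j => hunn _)
    have hc1 : c ≤ 1 := le_of_tendsto hm'c (Eventually.of_forall fun j => hule _)
    have hidx : ∀ t : ℤ, Tendsto (fun j => ((m (ψ j) : ℤ) + t).toNat) atTop atTop := by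
      intro t
      rw [tendsto_atTop]
      intro b
      filter_upwards [hm'.eventually_ge_atTop (b + t.natAbs + 1)] with j hj
      omega
    have hw0 : w 0 = c := by
      have h1 := hconv 0
      have h2 : (fun j => uRen p ((m (ψ j) : ℤ) + 0).toNat) = fun j => uRen p (m (ψ j)) := by
        funext j; norm_num
      rw [h2] at h1
      exact tendsto_nhds_unique h1 hm'c
    have hwle : ∀ t : ℤ, sgn * (w t - c) ≤ 0 := by
      intro t
      have h0 : ∀ ε : ℝ, 0 < ε → sgn * (w t - c) ≤ 0 + ε := by
        intro ε hε
        have hlim : Tendsto (fun j => sgn * (uRen p ((m (ψ j) : ℤ) + t).toNat - c)) atTop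
            (nhds (sgn * (w t - c))) := ((hconv t).sub_const c).const_mul sgn
        apply le_of_tendsto hlim
        filter_upwards [(hidx t).eventually (hone ε hε)] with j hj
        rw [zero_add]; exact hj
      exact le_of_forall_pos_le_add h0
    -- summability helpers
    have hsw : ∀ t : ℤ, Summable (fun s : ℕ => p s * w (t - s)) := by
      intro t
      apply Summable.of_nonneg_of_le (fun s => mul_nonneg (hpnn s) (hwmem _).1)
        (fun s => ?_) hpsum
      calc p s * w (t - s) ≤ p s * 1 := mul_le_mul_of_nonneg_left (hwmem _).2 (hpnn s)
        _ = p s := mul_one _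
    -- the renewal equation for w
    have hweq : ∀ t : ℤ, w t = ∑' s : ℕ, p s * w (t - s) := by
      intro t
      have hts : Tendsto (fun j => ∑' s : ℕ,
          (if (s : ℤ) ≤ (m (ψ j) : ℤ) + t then p s * uRen p (((m (ψ j) : ℤ) + t - s).toNat) else 0))
          atTop (nhds (∑' s : ℕ, p s * w (t - s))) := by
        apply tendsto_tsum_of_dominated_convergence hpsum
        · intro s
          have hev2 : ∀ᶠ j in atTop, (s:ℤ) ≤ (m (ψ j) : ℤ) + t := by
            filter_upwards [hm'.eventually_ge_atTop (s + t.natAbs + 1)] with j hj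
            omega
          apply Tendsto.congr' _ ((hconv (t - s)).const_mul (p s))
          filter_upwards [hev2] with j hj
          rw [if_pos hj]
          congr 2
          omega
        · apply Eventually.of_forall
          intro j s
          split
          · rw [Real.norm_eq_abs, abs_of_nonneg (mul_nonneg (hpnn s) (hunn _))]
            calc p s * uRen p _ ≤ p s * 1 := mul_le_mul_of_nonneg_left (hule _) (hpnn s)
              _ = p s := mul_one _
          · simpa using hpnn s
      have hts2 : Tendsto (fun j => uRen p ((m (ψ j) : ℤ) + t).toNat) atTop
          (nhds (∑' s : ℕ, p s * w (t - s))) := by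
        apply Tendsto.congr' _ hts
        have hev : ∀ᶠ j in atTop, (1 : ℤ) ≤ (m (ψ j) : ℤ) + t := by
          filter_upwards [hm'.eventually_ge_atTop (t.natAbs + 1)] with j hj
          omega
        filter_upwards [hev] with j hj
        obtain ⟨N, hN⟩ : ∃ N : ℕ, ((m (ψ j) : ℤ) + t) = (N : ℤ) + 1 :=
          ⟨((m (ψ j) : ℤ) + t).toNat - 1, by omega⟩
        rw [hN, show (((N:ℤ)+1)).toNat = N + 1 by omega, uRen_tsum hp0 N]
        apply tsum_congr
        intro s
        by_cases hs : s ≤ N + 1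
        · rw [if_pos (by exact_mod_cast hs), if_pos hs]
          congr 2
          omega
        · rw [if_neg (by exact_mod_cast hs), if_neg hs]
      exact tendsto_nhds_unique (hconv t) hts2
    -- reduce to the nonneg solution v
    set v : ℤ → ℝ := fun t => sgn * (c - w t) with hvdef
    have hvnn : ∀ t, 0 ≤ v t := by
      intro t
      have := hwle t
      simp only [hvdef]
      nlinarith
    have hv0 : v 0 = 0 := by simp [hvdef, hw0]
    have hveq : ∀ t : ℤ, v t = ∑' s : ℕ, p s * v (t - s) := by
      intro t
      have h1 : ∀ s : ℕ, p s * v (t - s) = sgn * (p s * c - p s * w (t - s)) := by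
        intro s; simp only [hvdef]; ring
      rw [tsum_congr h1, tsum_mul_left,
        Summable.tsum_sub (hpsum.mul_right c) (hsw t), tsum_mul_right, hptot, one_mul, ← hweq t]
    have hvsum : ∀ t : ℤ, Summable (fun s : ℕ => p s * v (t - s)) := by
      intro t
      have hvle1 : ∀ t' : ℤ, v t' ≤ 1 := by
        intro t'
        rcases hsgn with h | h <;> simp only [hvdef, h] <;> nlinarith [(hwmem t').1, (hwmem t').2]
      apply Summable.of_nonneg_of_le (fun s => mul_nonneg (hpnn s) (hvnn _))
        (fun s => ?_) hpsum
      calc p s * v (t - s) ≤ p s * 1 := mul_le_mul_of_nonneg_left (hvle1 _) (hpnn s)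
        _ = p s := mul_one _
    have hprop : ∀ (s : ℕ) (t : ℤ), v t = 0 → p s ≠ 0 → v (t - s) = 0 := by
      intro s t hvt hps
      have hsum0 : ∑' s' : ℕ, p s' * v (t - s') = 0 := by rw [← hveq t, hvt]
      have hterm : ∀ s' : ℕ, 0 ≤ p s' * v (t - s') := fun s' => mul_nonneg (hpnn s') (hvnn _)
      have h2 : p s * v (t - s) ≤ 0 := by
        rw [← hsum0]
        exact Summable.le_tsum (hvsum t) s (fun j _ => hterm j)
      have h3 : p s * v (t - s) = 0 := le_antisymm h2 (hterm s)
      rcases mul_eq_zero.mp h3 with h | h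
      · exact absurd h hps
      · exact h
    have hzero : ∀ t : ℤ, v t = 0 := by
      have hbase : ∀ t : ℤ, t ≤ -(T₀:ℤ) → v t = 0 := by
        intro t ht
        obtain ⟨s, hs1, hs2⟩ : ∃ s : ℕ, (s:ℤ) = -t ∧ T₀ ≤ s := ⟨(-t).toNat, by omega, by omega⟩
        have := hprop s 0 hv0 (ne_of_gt (hsupp s hs2))
        rwa [show (0 : ℤ) - s = t by omega] at this
      have hstep : ∀ n : ℕ, ∀ t : ℤ, t ≤ -(T₀:ℤ) + n → v t = 0 := by
        intro n
        induction n with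
        | zero => intro t ht; exact hbase t (by omega)
        | succ n ih =>
          intro t ht
          rcases le_or_gt t (-(T₀:ℤ) + n) with h | h
          · exact ih t h
          · rw [hveq t]
            have hz : ∀ s : ℕ, p s * v (t - s) = 0 := by
              intro s
              match s with
              | 0 => rw [hp0, zero_mul]
              | Nat.succ s =>
                rw [ih (t - (s+1 : ℕ)) (by push_cast; omega), mul_zero]
            rw [tsum_congr hz, tsum_zero]
      intro t
      exact hstep (t + T₀).toNat t (by omega)
    have hwc : ∀ t : ℤ, w t = c := by
      intro t
      have h1 := hzero t
      simp only [hvdef] at h1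
      rcases mul_eq_zero.mp h1 with h | h
      · exact absurd h hsgn0
      · linarith
    -- the identity in the limit
    have hid : Tendsto (fun j => ∑' t : ℕ,
        (if t ≤ m (ψ j) then tailR p t * uRen p (m (ψ j) - t) else 0))
        atTop (nhds (∑' t : ℕ, tailR p t * w (-(t:ℤ)))) := by
      apply tendsto_tsum_of_dominated_convergence (tailR_summable hpnn hpsum hμs)
      · intro t
        apply Tendsto.congr' _ ((hconv (-(t:ℤ))).const_mul (tailR p t))
        filter_upwards [hm'.eventually_ge_atTop t] with j hj
        rw [if_pos hj]
        congr 2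
        omega
      · apply Eventually.of_forall
        intro j t
        split
        · rw [Real.norm_eq_abs, abs_of_nonneg (mul_nonneg (tailR_nonneg hpnn t) (hunn _))]
          calc tailR p t * uRen p _ ≤ tailR p t * 1 :=
                mul_le_mul_of_nonneg_left (hule _) (tailR_nonneg hpnn t)
            _ = tailR p t := mul_one _
        · simpa using tailR_nonneg hpnn t
    have hconst : (fun j => ∑' t : ℕ,
        (if t ≤ m (ψ j) then tailR p t * uRen p (m (ψ j) - t) else 0)) = fun _ => (1:ℝ) := by
      funext j
      rw [tsum_eq_sum (s := Finset.range (m (ψ j) + 1))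
        (fun t ht => if_neg (by rw [Finset.mem_range] at ht; omega))]
      rw [Finset.sum_congr rfl
        (fun t ht => if_pos (by rw [Finset.mem_range] at ht; omega))]
      exact tailR_identity hp0 hpnn hpsum hptot (m (ψ j))
    rw [hconst] at hid
    have h1 : ∑' t : ℕ, tailR p t * w (-(t:ℤ)) = 1 :=
      tendsto_nhds_unique hid tendsto_const_nhds
    have h2 : ∀ t : ℕ, tailR p t * w (-(t:ℤ)) = tailR p t * c := fun t => by rw [hwc]
    rw [tsum_congr h2, tsum_mul_right, tailR_tsum hpnn hpsum hμs, ← hμdef] at h1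
    linarith [h1]
  -- apply `main` to limsup and liminf
  set lam := limsup (uRen p) atTop with hlamdef
  set kap := liminf (uRen p) atTop with hkapdef
  have hcob_le : IsCoboundedUnder (· ≤ ·) atTop (uRen p) := hbdd_ge.isCoboundedUnder_le
  have hcob_ge : IsCoboundedUnder (· ≥ ·) atTop (uRen p) := hbdd_le.isCoboundedUnder_ge
  have haux : Tendsto (fun k : ℕ => 1 / ((k:ℝ)+1)) atTop (nhds 0) :=
    tendsto_one_div_add_atTop_nhds_zero_nat
  -- limsup subsequence
  have hfreq1 : ∀ k : ℕ, ∃ᶠ n in atTop, |uRen p n - lam| < 1/((k:ℝ)+1) := by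
    intro k
    have hkpos : (0:ℝ) < 1/((k:ℝ)+1) := by positivity
    have h1 : ∃ᶠ n in atTop, lam - 1/((k:ℝ)+1) < uRen p n :=
      frequently_lt_of_lt_limsup hcob_le (by linarith)
    have h2 : ∀ᶠ n in atTop, uRen p n < lam + 1/((k:ℝ)+1) :=
      eventually_lt_of_limsup_lt (by linarith) hbdd_le
    apply (h1.and_eventually h2).mono
    rintro n ⟨hn1, hn2⟩
    rw [abs_lt]
    constructor <;> linarith
  obtain ⟨φ1, hφ1mono, hφ1⟩ := extraction_forall_of_frequently hfreq1
  have hφ1lim : Tendsto (fun k => uRen p (φ1 k)) atTop (nhds lam) := by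
    apply tendsto_of_tendsto_of_tendsto_of_le_of_le'
      (g := fun k : ℕ => lam - 1/((k:ℝ)+1)) (h := fun k : ℕ => lam + 1/((k:ℝ)+1))
    · simpa using (tendsto_const_nhds (x := lam)).sub haux
    · simpa using (tendsto_const_nhds (x := lam)).add haux
    · apply Eventually.of_forall
      intro k
      have := hφ1 k
      rw [abs_lt] at this
      linarith [this.1]
    · apply Eventually.of_forall
      intro k
      have := hφ1 k
      rw [abs_lt] at this
      linarith [this.2]
  have hlam : lam * μ = 1 := by
    apply main lam 1 (Or.inl rfl) φ1 hφ1mono.tendsto_atTop hφ1lim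
    intro ε hε
    have h2 : ∀ᶠ n in atTop, uRen p n < lam + ε :=
      eventually_lt_of_limsup_lt (by linarith) hbdd_le
    filter_upwards [h2] with n hn
    rw [one_mul]
    linarith
  -- liminf subsequence
  have hfreq2 : ∀ k : ℕ, ∃ᶠ n in atTop, |uRen p n - kap| < 1/((k:ℝ)+1) := by
    intro k
    have hkpos : (0:ℝ) < 1/((k:ℝ)+1) := by positivity
    have h1 : ∃ᶠ n in atTop, uRen p n < kap + 1/((k:ℝ)+1) :=
      frequently_lt_of_liminf_lt hcob_ge (by linarith)
    have h2 : ∀ᶠ n in atTop, kap - 1/((k:ℝ)+1) < uRen p n :=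
      eventually_lt_of_lt_liminf (by linarith) hbdd_ge
    apply (h1.and_eventually h2).mono
    rintro n ⟨hn1, hn2⟩
    rw [abs_lt]
    constructor <;> linarith
  obtain ⟨φ2, hφ2mono, hφ2⟩ := extraction_forall_of_frequently hfreq2
  have hφ2lim : Tendsto (fun k => uRen p (φ2 k)) atTop (nhds kap) := by
    apply tendsto_of_tendsto_of_tendsto_of_le_of_le'
      (g := fun k : ℕ => kap - 1/((k:ℝ)+1)) (h := fun k : ℕ => kap + 1/((k:ℝ)+1))
    · simpa using (tendsto_const_nhds (x := kap)).sub haux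
    · simpa using (tendsto_const_nhds (x := kap)).add haux
    · apply Eventually.of_forall
      intro k
      have := hφ2 k
      rw [abs_lt] at this
      linarith [this.1]
    · apply Eventually.of_forall
      intro k
      have := hφ2 k
      rw [abs_lt] at this
      linarith [this.2]
  have hkap : kap * μ = 1 := by
    apply main kap (-1) (Or.inr rfl) φ2 hφ2mono.tendsto_atTop hφ2lim
    intro ε hε
    have h2 : ∀ᶠ n in atTop, kap - ε < uRen p n :=
      eventually_lt_of_lt_liminf (by linarith) hbdd_ge
    filter_upwards [h2] with n hn
    nlinarith
  -- conclude
  have hμne : μ ≠ 0 := ne_of_gt hμpos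
  apply tendsto_of_liminf_eq_limsup _ _ hbdd_le hbdd_ge
  · rw [← hkapdef]; field_simp; linarith [hkap]
  · rw [← hlamdef]; field_simp; linarith [hlam]

lemma convPow_scale (q : ℕ → ℝ) (δ F : ℝ) :
    ∀ k N, convPow (fun t : ℕ => δ * q t * Real.exp (-F * t)) k N
      = δ ^ k * Real.exp (-F * N) * convPow q k N := by
  intro k
  induction k with
  | zero =>
    intro N
    match N with
    | 0 => simp [convPow]
    | N + 1 => simp [convPow]
  | succ k ih =>
    intro N
    rw [convPow, convPow, Finset.mul_sum]
    apply Finset.sum_congr rfl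
    intro i hi
    rw [Finset.mem_range] at hi
    rw [ih i]
    have hcast : ((N - i : ℕ) : ℝ) = (N : ℝ) - i := by
      rw [Nat.cast_sub (by omega)]
    have hexp : Real.exp (-F * i) * Real.exp (-F * ((N:ℝ) - i)) = Real.exp (-F * N) := by
      rw [← Real.exp_add, show (-F * (i:ℝ) + -F * ((N:ℝ) - i)) = -F * N by ring]
    rw [hcast]
    rw [← hexp]
    ring

/-- Localized regime, constrained case: for `δ > 1`,
`Z^c_{δ,N} ~ (1/μ_δ) e^{N F_δ}` as `N → ∞`, where `F_δ > 0` is the free energy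
(`δ ∑_{t≥1} q(t) e^{−F_δ t} = 1`) and `μ_δ = ∑_{t≥1} t · δ q(t) e^{−F_δ t}`. -/
theorem stmt_8 (L : ℕ → ℝ) (hLpos : ∀ n, 0 < L n) (hL : SlowlyVaryingNat L)
    (c_q : ℝ) (hcq : 0 < c_q)
    (q : ℕ → ℝ) (hq0 : q 0 = 0) (hqmem : ∀ n, q n ∈ Set.Icc (0 : ℝ) 1)
    (hqsum : ∑' n, q n = 1)
    (hqa : Tendsto (fun n : ℕ => (n : ℝ) ^ ((3 : ℝ) / 2) * q n / L n) atTop (nhds c_q))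
    (δ : ℝ) (hδ : 1 < δ)
    (F : ℝ) (hF : 0 < F) (hFeq : δ * ∑' t : ℕ, q t * Real.exp (-F * t) = 1)
    (hμ : Summable (fun t : ℕ => (t : ℝ) * (δ * q t * Real.exp (-F * t)))) :
    Tendsto (fun N : ℕ =>
        Zc q δ N /
          ((1 / ∑' t : ℕ, (t : ℝ) * (δ * q t * Real.exp (-F * t))) * Real.exp (N * F)))
      atTop (nhds 1) := by
  have hqnn : ∀ n, 0 ≤ q n := fun n => (hqmem n).1
  have hδ0 : (0:ℝ) < δ := lt_trans one_pos hδ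
  have hp0 : δ * q 0 * Real.exp (-F * (0:ℕ)) = 0 := by rw [hq0]; ring
  have hpnn : ∀ t : ℕ, 0 ≤ δ * q t * Real.exp (-F * t) := fun t =>
    mul_nonneg (mul_nonneg hδ0.le (hqnn t)) (Real.exp_pos _).le
  have hqsummable : Summable q := by
    by_contra h
    rw [tsum_eq_zero_of_not_summable h] at hqsum
    norm_num at hqsum
  have hqe_summable : Summable (fun t : ℕ => q t * Real.exp (-F * t)) := by
    apply Summable.of_nonneg_of_le
      (fun t => mul_nonneg (hqnn t) (Real.exp_pos _).le) (fun t => ?_) hqsummable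
    calc q t * Real.exp (-F * t) ≤ q t * 1 := by
          apply mul_le_mul_of_nonneg_left _ (hqnn t)
          rw [Real.exp_le_one_iff]
          have : (0:ℝ) ≤ (t:ℝ) := Nat.cast_nonneg t
          nlinarith
      _ = q t := mul_one _
  have hpsum : Summable (fun t : ℕ => δ * q t * Real.exp (-F * t)) := by
    simpa [mul_assoc] using hqe_summable.mul_left δ
  have hptot : ∑' t : ℕ, δ * q t * Real.exp (-F * t) = 1 := by
    simp only [mul_assoc]
    rw [tsum_mul_left]
    exact hFeq
  obtain ⟨T₀, hT₀⟩ : ∃ T₀ : ℕ, ∀ n, T₀ ≤ n → 0 < q n := by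
    have hev : ∀ᶠ n : ℕ in atTop, c_q/2 < (n : ℝ) ^ ((3:ℝ)/2) * q n / L n :=
      hqa.eventually (eventually_gt_nhds (by linarith))
    obtain ⟨T₀, hT₀⟩ := eventually_atTop.mp hev
    refine ⟨T₀, fun n hn => ?_⟩
    have h1 := hT₀ n hn
    rcases lt_or_eq_of_le (hqnn n) with h | h
    · exact h
    · rw [← h] at h1
      norm_num at h1
      linarith
  have hsupp : ∀ t : ℕ, T₀ ≤ t → 0 < δ * q t * Real.exp (-F * t) := fun t ht =>
    mul_pos (mul_pos hδ0 (hT₀ t ht)) (Real.exp_pos _)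
  have hten := renewal_tendsto (fun t : ℕ => δ * q t * Real.exp (-F * t))
    hp0 hpnn hpsum hptot hμ T₀ hsupp
  set S : ℝ := ∑' t : ℕ, (t : ℝ) * (δ * q t * Real.exp (-F * t)) with hSdef
  have hS1 : 1 ≤ S := by
    rw [hSdef, ← hptot]
    apply Summable.tsum_le_tsum _ hpsum hμ
    intro t
    match t with
    | 0 => rw [hq0]; simp
    | Nat.succ t =>
      have h1 : (1:ℝ) ≤ ((t+1 : ℕ) : ℝ) := by exact_mod_cast Nat.succ_le_succ (Nat.zero_le t)
      nlinarith [hpnn (t+1)]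
  have hSpos : (0:ℝ) < S := lt_of_lt_of_le one_pos hS1
  have hZc : ∀ N : ℕ, Zc q δ N
      = Real.exp ((N:ℝ) * F) * uRen (fun t : ℕ => δ * q t * Real.exp (-F * t)) N := by
    intro N
    rw [Zc, uRen, Finset.mul_sum]
    apply Finset.sum_congr rfl
    intro k _
    rw [convPow_scale]
    have hexp1 : Real.exp ((N:ℝ) * F) * Real.exp (-F * N) = 1 := by
      rw [← Real.exp_add, show ((N:ℝ) * F + -F * N) = 0 by ring, Real.exp_zero]
    linear_combination (-(δ ^ k * convPow q k N)) * hexp1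
  have hlim : Tendsto (fun N : ℕ =>
      uRen (fun t : ℕ => δ * q t * Real.exp (-F * t)) N * S) atTop (nhds 1) := by
    have := hten.mul_const S
    have h2 : (1 / S) * S = 1 := by field_simp
    rw [show (1 / ∑' t : ℕ, (t:ℝ) * ((fun t : ℕ => δ * q t * Real.exp (-F * t)) t)) = 1 / S
      from rfl, h2] at this
    exact this
  apply Tendsto.congr _ hlim
  intro N
  rw [hZc N]
  have hexpne : Real.exp ((N:ℝ) * F) ≠ 0 := (Real.exp_pos _).ne'
  field_simp
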